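/- Let δ¹ > ... > δⁿ be reals in (0,1) and θ₀ ∈ (0,1)ⁿ with ∑ᵢθ₀ⁱ = 1. Define μ_t := (∑ᵢ θ₀ⁱ(δⁱ)^{t+1})/(∑ᵢ θ₀ⁱ(δⁱ)^t). Then the sequence (μ_t) is strictly increasing in t and converges to δ¹ as t → ∞. -/

import Mathlib

open Finset Filter

theorem stmt_8 (n : ℕ) (hn : 2 ≤ n) (δ θ₀ : Fin n → ℝ)
    (hδ1 : ∀ i, 0 < δ i) (hδ2 : ∀ i, δ i < 1)
    (hδanti : ∀ i j : Fin n, i < j → δ j < δ i)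
    (hθ0 : ∀ i, 0 < θ₀ i) (hθ1 : ∀ i, θ₀ i < 1) (hθsum : ∑ i, θ₀ i = 1)
    (μ : ℕ → ℝ)
    (hμ : ∀ t, μ t = (∑ i, θ₀ i * (δ i) ^ (t + 1)) / (∑ i, θ₀ i * (δ i) ^ t)) :
    StrictMono μ ∧ Tendsto μ atTop (nhds (δ ⟨0, by omega⟩)) := by
  set i0 : Fin n := ⟨0, by omega⟩ with hi0
  set i1 : Fin n := ⟨1, by omega⟩ with hi1
  haveI : Nonempty (Fin n) := ⟨i0⟩
  set S : ℕ → ℝ := fun t => ∑ i, θ₀ i * δ i ^ t with hS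
  have hSpos : ∀ t, 0 < S t := fun t =>
    Finset.sum_pos (fun i _ => mul_pos (hθ0 i) (pow_pos (hδ1 i) t)) univ_nonempty
  -- key Cauchy-Schwarz-type inequality
  have hkey : ∀ t, S (t + 1) * S (t + 1) < S t * S (t + 2) := by
    intro t
    have e1 : S t * S (t + 2) =
        ∑ i, ∑ j, θ₀ i * δ i ^ t * (θ₀ j * δ j ^ (t + 2)) := Finset.sum_mul_sum _ _ _ _
    have e1' : S (t + 2) * S t =
        ∑ i, ∑ j, θ₀ i * δ i ^ (t + 2) * (θ₀ j * δ j ^ t) := Finset.sum_mul_sum _ _ _ _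
    have e2 : S (t + 1) * S (t + 1) =
        ∑ i, ∑ j, θ₀ i * δ i ^ (t + 1) * (θ₀ j * δ j ^ (t + 1)) := Finset.sum_mul_sum _ _ _ _
    have hid : 2 * (S t * S (t + 2) - S (t + 1) * S (t + 1)) =
        ∑ i, ∑ j, θ₀ i * θ₀ j * δ i ^ t * δ j ^ t * (δ i - δ j) ^ 2 := by
      have : 2 * (S t * S (t + 2) - S (t + 1) * S (t + 1)) =
          S t * S (t + 2) + S (t + 2) * S t - 2 * (S (t + 1) * S (t + 1)) := by ring
      rw [this, e1, e1', e2]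
      simp only [Finset.mul_sum, ← Finset.sum_add_distrib, ← Finset.sum_sub_distrib]
      refine Finset.sum_congr rfl fun i _ => Finset.sum_congr rfl fun j _ => by ring
    have hpos : 0 < ∑ i, ∑ j, θ₀ i * θ₀ j * δ i ^ t * δ j ^ t * (δ i - δ j) ^ 2 := by
      have hterm : ∀ i j : Fin n, 0 ≤ θ₀ i * θ₀ j * δ i ^ t * δ j ^ t * (δ i - δ j) ^ 2 :=
        fun i j => mul_nonneg (mul_nonneg (mul_nonneg (mul_nonneg (hθ0 i).le (hθ0 j).le)
          (pow_pos (hδ1 i) t).le) (pow_pos (hδ1 j) t).le) (sq_nonneg _)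
      refine Finset.sum_pos' (fun i _ => Finset.sum_nonneg fun j _ => hterm i j) ⟨i0, mem_univ _, ?_⟩
      refine Finset.sum_pos' (fun j _ => hterm i0 j) ⟨i1, mem_univ _, ?_⟩
      have h01 : i0 < i1 := by simp [hi0, hi1, Fin.lt_def]
      have hne : δ i1 < δ i0 := hδanti i0 i1 h01
      have hsq : (0:ℝ) < (δ i0 - δ i1) ^ 2 := pow_pos (by linarith) 2
      exact mul_pos (mul_pos (mul_pos (mul_pos (hθ0 i0) (hθ0 i1))
        (pow_pos (hδ1 i0) t)) (pow_pos (hδ1 i1) t)) hsq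
    linarith [hid, hpos]
  constructor
  · refine strictMono_nat_of_lt_succ fun t => ?_
    rw [hμ t, hμ (t + 1), div_lt_div_iff₀ (hSpos t) (hSpos (t + 1))]
    show S (t + 1) * S (t + 1) < S (t + 2) * S t
    calc S (t + 1) * S (t + 1) < S t * S (t + 2) := hkey t
      _ = S (t + 2) * S t := mul_comm _ _
  · -- convergence
    set r : Fin n → ℝ := fun i => δ i / δ i0 with hr
    have hδ0pos : 0 < δ i0 := hδ1 i0
    set T : ℕ → ℝ := fun t => ∑ i, θ₀ i * r i ^ t with hT
    have hSrT : ∀ t, S t = δ i0 ^ t * T t := by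
      intro t
      rw [hT, hS, Finset.mul_sum]
      refine Finset.sum_congr rfl fun i _ => ?_
      have h1 : δ i0 ^ t ≠ 0 := pow_ne_zero _ (ne_of_gt hδ0pos)
      simp only [hr]
      rw [div_pow]
      field_simp
    have hrlt : ∀ i : Fin n, i ≠ i0 → r i < 1 := by
      intro i hi
      have h0i : i0 < i := by
        simp only [hi0, Fin.lt_def]
        have : i.val ≠ 0 := fun h => hi (Fin.ext h)
        omega
      have := hδanti i0 i h0i
      rw [hr, div_lt_one hδ0pos]
      exact this
    have hTlim : Tendsto T atTop (nhds (θ₀ i0)) := by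
      have : Tendsto T atTop (nhds (∑ i, if i = i0 then θ₀ i0 else 0)) := by
        refine tendsto_finset_sum _ fun i _ => ?_
        by_cases hi : i = i0
        · rw [if_pos hi, hi]
          have h1 : r i0 = 1 := div_self (ne_of_gt hδ0pos)
          simpa [h1] using tendsto_const_nhds (α := ℝ) (f := atTop (α := ℕ))
        · simp only [if_neg hi]
          have h1 : (0:ℝ) ≤ r i := le_of_lt (div_pos (hδ1 i) hδ0pos)
          have h2 := hrlt i hi
          have := (tendsto_pow_atTop_nhds_zero_of_lt_one h1 h2).const_mul (θ₀ i)
          simpa using this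
      simpa using this
    have hTpos : ∀ t, 0 < T t := fun t =>
      Finset.sum_pos (fun i _ => mul_pos (hθ0 i) (pow_pos (div_pos (hδ1 i) hδ0pos) t))
        univ_nonempty
    have hμ' : ∀ t, μ t = δ i0 * (T (t + 1) / T t) := by
      intro t
      rw [hμ t]
      have hs1 : (∑ i, θ₀ i * δ i ^ (t + 1)) = S (t + 1) := rfl
      have hs0 : (∑ i, θ₀ i * δ i ^ t) = S t := rfl
      have h1 : (δ i0) ^ t ≠ 0 := pow_ne_zero _ (ne_of_gt hδ0pos)
      have h2 : T t ≠ 0 := ne_of_gt (hTpos t)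
      have h3 : T (t + 1) = T (t + 1) := rfl
      rw [hs1, hs0, hSrT (t + 1), hSrT t, pow_succ]
      field_simp
    have hlim : Tendsto (fun t => δ i0 * (T (t + 1) / T t)) atTop (nhds (δ i0)) := by
      have h1 : Tendsto (fun t => T (t + 1)) atTop (nhds (θ₀ i0)) :=
        hTlim.comp (tendsto_add_atTop_nat 1)
      have h2 : Tendsto (fun t => T (t + 1) / T t) atTop (nhds 1) := by
        have := h1.div hTlim (ne_of_gt (hθ0 i0))
        rw [div_self (ne_of_gt (hθ0 i0))] at this
        exact this
      have := h2.const_mul (δ i0)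
      simpa using this
    have : μ = fun t => δ i0 * (T (t + 1) / T t) := funext hμ'
    rw [this]
    exact hlim
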